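/- arXiv:2604.02587 — 7 statements merged into one kernel-verified Lean document; each statement's English description precedes it below -/
import Mathlib

section
/- For circular Nim CN(3,2) (three stacks arranged in a circle, each move removes at least one token total from two consecutive stacks), the set of P-positions is exactly {(a,a,a) : a ≥ 0}. -/
/-- A legal move in SetNim: at least one stack strictly decreases, all changed
stacks lie in some allowed move set, stacks weakly decrease. -/
def Move {V : Type} (A : Set (Set V)) (p q : V → ℕ) : Prop :=
  q ≠ p ∧ (∀ i, q i ≤ p i) ∧ ∃ a ∈ A, ∀ i, q i ≠ p i → i ∈ a

/-- P-positions: positions all of whose options are N-positions. -/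
def PPos {V : Type} [Fintype V] (A : Set (Set V)) (p : V → ℕ) : Prop :=
  ∀ q, Move A p q → ¬ PPos A q
termination_by Finset.univ.sum p
decreasing_by
  rename_i hq
  obtain ⟨hne, hle, -⟩ := hq
  refine Finset.sum_lt_sum (fun i _ => hle i) ?_
  obtain ⟨i, hi⟩ := Function.ne_iff.mp hne
  exact ⟨i, Finset.mem_univ i, lt_of_le_of_ne (hle i) hi⟩


/-- Move sets of circular Nim CN(3,2): two consecutive stacks. -/
def CN32 : Set (Set (Fin 3)) := {s | ∃ i : Fin 3, s = {i, i + 1}}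

lemma fin3_cases : ∀ i j : Fin 3, i ≠ j → i = j + 1 ∨ i = j + 1 + 1 := by decide

lemma fin3_third : ∀ i : Fin 3, i + 1 + 1 ≠ i ∧ i + 1 + 1 ≠ i + 1 := by decide

/-- the P-positions of CN(3,2) are exactly the constant positions. -/
theorem cn32_ppos (p : Fin 3 → ℕ) :
    PPos CN32 p ↔ ∃ a : ℕ, ∀ i, p i = a := by
  suffices H : ∀ n (p : Fin 3 → ℕ), Finset.univ.sum p = n →
      (PPos CN32 p ↔ ∃ a : ℕ, ∀ i, p i = a) from H _ p rfl
  intro n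
  induction n using Nat.strong_induction_on with
  | _ n IH =>
  intro p hn
  subst hn
  rw [PPos]
  constructor
  · intro h
    by_contra hnc
    push_neg at hnc
    obtain ⟨j, hj⟩ := Finite.exists_min p
    obtain ⟨i₀, hi₀⟩ := hnc (p j)
    set q : Fin 3 → ℕ := fun _ => p j with hq
    have hsumlt : Finset.univ.sum q < Finset.univ.sum p := by
      refine Finset.sum_lt_sum (fun i _ => hj i) ?_
      exact ⟨i₀, Finset.mem_univ i₀, lt_of_le_of_ne (hj i₀) (Ne.symm hi₀)⟩
    have hmove : Move CN32 p q := by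
      refine ⟨?_, hj, {j + 1, j + 1 + 1}, ⟨j + 1, rfl⟩, ?_⟩
      · intro hqp
        exact hi₀ (by rw [← hqp])
      · intro i hi
        have hij : i ≠ j := fun hij => hi (by simp [hq, hij])
        rcases fin3_cases i j hij with h1 | h1 <;> simp [h1]
    have hPq : PPos CN32 q := by
      rw [IH _ hsumlt q rfl]
      exact ⟨p j, fun _ => rfl⟩
    exact h q hmove hPq
  · rintro ⟨a, ha⟩ q ⟨hne, hle, s, ⟨i, rfl⟩, hsub⟩
    obtain ⟨i₀, hi₀⟩ := Function.ne_iff.mp hne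
    have hsumlt : Finset.univ.sum q < Finset.univ.sum p := by
      refine Finset.sum_lt_sum (fun i _ => hle i) ?_
      exact ⟨i₀, Finset.mem_univ i₀, lt_of_le_of_ne (hle i₀) hi₀⟩
    rw [IH _ hsumlt q rfl]
    rintro ⟨b, hb⟩
    have h3 := fin3_third i
    have hq3 : q (i + 1 + 1) = p (i + 1 + 1) := by
      by_contra hne3
      rcases hsub _ hne3 with h | h
      · exact h3.1 h
      · exact h3.2 h
    have hlt : q i₀ < a := lt_of_le_of_ne (by rw [← ha i₀]; exact hle i₀)
      (fun h => hi₀ (by rw [h, ha i₀]))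
    rw [hb i₀] at hlt
    rw [hb (i + 1 + 1), ha (i + 1 + 1)] at hq3
    omega
end

section
/- For circular Nim CN(4,2) (four stacks in a circle, each move removes at least one token total from two consecutive stacks), the set of P-positions is exactly {(a,b,a,b) : a,b ≥ 0}. -/
/-- Move sets of circular Nim CN(4,2): two consecutive stacks. -/
def CN42 : Set (Set (Fin 4)) := {s | ∃ i : Fin 4, s = {i, i + 1}}

lemma ppos_iff {V : Type} [Fintype V] (A : Set (Set V)) (p : V → ℕ) :
    PPos A p ↔ ∀ q, Move A p q → ¬ PPos A q := by
  rw [PPos]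

lemma move_sum_lt {V : Type} [Fintype V] {A : Set (Set V)} {p q : V → ℕ} (h : Move A p q) :
    Finset.univ.sum q < Finset.univ.sum p := by
  obtain ⟨hne, hle, -⟩ := h
  refine Finset.sum_lt_sum (fun i _ => hle i) ?_
  obtain ⟨i, hi⟩ := Function.ne_iff.mp hne
  exact ⟨i, Finset.mem_univ i, lt_of_le_of_ne (hle i) hi⟩

def Bal (p : Fin 4 → ℕ) : Prop := p 0 = p 2 ∧ p 1 = p 3

lemma bal_iff (p : Fin 4 → ℕ) : Bal p ↔ ∃ a b : ℕ, p = ![a, b, a, b] := by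
  constructor
  · rintro ⟨h1, h2⟩
    refine ⟨p 0, p 1, funext fun j => ?_⟩
    fin_cases j <;> simp_all
  · rintro ⟨a, b, rfl⟩
    exact ⟨rfl, rfl⟩

lemma mk_move (p : Fin 4 → ℕ) (i : Fin 4) (q : Fin 4 → ℕ)
    (hle : ∀ j, q j ≤ p j) (hfix : ∀ j, j ≠ i → j ≠ i + 1 → q j = p j)
    (hne : q ≠ p) : Move CN42 p q := by
  refine ⟨hne, hle, {i, i + 1}, ⟨i, rfl⟩, fun j hj => ?_⟩
  by_contra hmem
  simp only [Set.mem_insert_iff, Set.mem_singleton_iff, not_or] at hmem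
  exact hj (hfix j hmem.1 hmem.2)

lemma move_to_bal {p : Fin 4 → ℕ} (h : ¬ Bal p) : ∃ q, Move CN42 p q ∧ Bal q := by
  have h' : p 0 ≠ p 2 ∨ p 1 ≠ p 3 := by
    by_contra hc; push_neg at hc; exact h ⟨hc.1, hc.2⟩
  rcases le_total (p 0) (p 2) with h02 | h20 <;> rcases le_total (p 1) (p 3) with h13 | h31
  · -- use i = 2 : q = ![p 0, p 1, p 0, p 1]
    refine ⟨![p 0, p 1, p 0, p 1], mk_move p 2 _ ?_ ?_ ?_, rfl, rfl⟩
    · intro j; fin_cases j <;> simp [h02, h13]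
    · intro j hj hj'; fin_cases j <;> simp_all
    · intro hc
      have h2 := congrFun hc 2; have h3 := congrFun hc 3
      simp at h2 h3; omega
  · -- p0 ≤ p2, p3 ≤ p1 : use i = 1 : q = ![p 0, p 3, p 0, p 3]
    refine ⟨![p 0, p 3, p 0, p 3], mk_move p 1 _ ?_ ?_ ?_, rfl, rfl⟩
    · intro j; fin_cases j <;> simp [h02, h31]
    · intro j hj hj'; fin_cases j <;> simp_all
    · intro hc
      have h2 := congrFun hc 1; have h3 := congrFun hc 2
      simp at h2 h3; omega
  · -- p2 ≤ p0, p1 ≤ p3 : use i = 3 : q = ![p 2, p 1, p 2, p 1]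
    refine ⟨![p 2, p 1, p 2, p 1], mk_move p 3 _ ?_ ?_ ?_, rfl, rfl⟩
    · intro j; fin_cases j <;> simp [h20, h13]
    · intro j hj hj'; fin_cases j <;> simp_all
    · intro hc
      have h2 := congrFun hc 3; have h3 := congrFun hc 0
      simp at h2 h3; omega
  · -- p2 ≤ p0, p3 ≤ p1 : use i = 0 : q = ![p 2, p 3, p 2, p 3]
    refine ⟨![p 2, p 3, p 2, p 3], mk_move p 0 _ ?_ ?_ ?_, rfl, rfl⟩
    · intro j; fin_cases j <;> simp [h20, h31]
    · intro j hj hj'; fin_cases j <;> simp_all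
    · intro hc
      have h2 := congrFun hc 0; have h3 := congrFun hc 1
      simp at h2 h3; omega

lemma mirror {p q : Fin 4 → ℕ} (hb : Bal p) (hm : Move CN42 p q) :
    ∃ q', Move CN42 q q' ∧ Bal q' := by
  obtain ⟨hne, hle, a, ⟨i, rfl⟩, hsub⟩ := hm
  -- balanced means p (j + 2) = p j for all j
  have hb2 : ∀ j : Fin 4, p (j + 2) = p j := by
    obtain ⟨h1, h2⟩ := hb
    intro j
    fin_cases j
    · show p 2 = p 0; exact h1.symm
    · show p 3 = p 1; exact h2.symm
    · show p 0 = p 2; exact h1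
    · show p 1 = p 3; exact h2
  have haux : ∀ j : Fin 4, j + 2 + 2 = j := by decide
  have hdisj : ∀ i j : Fin 4, (j = i ∨ j = i + 1) → ¬(j + 2 = i ∨ j + 2 = i + 1) := by
    decide
  refine ⟨fun j => min (q j) (q (j + 2)), ⟨?_, fun j => min_le_left _ _,
    {i + 2, i + 2 + 1}, ⟨i + 2, rfl⟩, ?_⟩, ?_⟩
  · -- q' ≠ q
    obtain ⟨j, hj⟩ := Function.ne_iff.mp hne
    have hjm : j = i ∨ j = i + 1 := by
      have := hsub j hj
      simpa [Set.mem_insert_iff] using this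
    have hj2 : q (j + 2) = p (j + 2) := by
      by_contra hc
      have := hsub _ hc
      simp only [Set.mem_insert_iff, Set.mem_singleton_iff] at this
      exact hdisj i j hjm this
    rw [Function.ne_iff]
    refine ⟨j + 2, ?_⟩
    show min (q (j + 2)) (q (j + 2 + 2)) ≠ q (j + 2)
    rw [haux j, hj2, hb2 j]
    have := lt_of_le_of_ne (hle j) hj
    omega
  · -- changed stacks of mirror move lie in {i+2, i+3}
    intro j hj
    have hj' : min (q j) (q (j + 2)) ≠ q j := hj
    have hlt : q (j + 2) < q j := by omega
    have hc : q (j + 2) ≠ p (j + 2) := by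
      have := hle j
      rw [hb2 j]
      omega
    have := hsub _ hc
    simp only [Set.mem_insert_iff, Set.mem_singleton_iff] at this ⊢
    rcases this with h | h
    · left; rw [← h, haux j]
    · right; rw [show i + 2 + 1 = i + 1 + 2 by exact add_right_comm i 2 1, ← h, haux j]
  · -- balance of q'
    constructor
    · show min (q 0) (q (0 + 2)) = min (q 2) (q (2 + 2))
      have e1 : (0 : Fin 4) + 2 = 2 := by decide
      have e2 : (2 : Fin 4) + 2 = 0 := by decide
      rw [e1, e2, min_comm]
    · show min (q 1) (q (1 + 2)) = min (q 3) (q (3 + 2))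
      have e1 : (1 : Fin 4) + 2 = 3 := by decide
      have e2 : (3 : Fin 4) + 2 = 1 := by decide
      rw [e1, e2, min_comm]

lemma main (n : ℕ) : ∀ p : Fin 4 → ℕ, Finset.univ.sum p ≤ n → (PPos CN42 p ↔ Bal p) := by
  induction n using Nat.strong_induction_on with
  | _ n ih =>
    intro p hpn
    constructor
    · intro hP
      by_contra hb
      obtain ⟨q, hmv, hbq⟩ := move_to_bal hb
      have hq : PPos CN42 q :=
        (ih _ (lt_of_lt_of_le (move_sum_lt hmv) hpn) q le_rfl).mpr hbq
      exact (ppos_iff _ _).mp hP q hmv hq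
    · intro hb
      rw [ppos_iff]
      intro q hmv hPq
      obtain ⟨q', hmv', hbq'⟩ := mirror hb hmv
      have hq' : PPos CN42 q' :=
        (ih _ (lt_of_lt_of_le (lt_trans (move_sum_lt hmv') (move_sum_lt hmv)) hpn)
          q' le_rfl).mpr hbq'
      exact (ppos_iff _ _).mp hPq q' hmv' hq'

/-- the P-positions of CN(4,2) are exactly the positions (a,b,a,b). -/
theorem cn42_ppos (p : Fin 4 → ℕ) :
    PPos CN42 p ↔ ∃ a b : ℕ, p = ![a, b, a, b] := by
  exact (main (Finset.univ.sum p) p le_rfl).trans (bal_iff p)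
end

section
/- Every position (a,b,c,d,e,f) ∈ ℕ⁶ satisfying a+b = d+e and b+c = e+f can be written as a non-negative integer linear combination of the five vectors z₁=(1,0,0,1,0,0), z₂=(0,1,0,0,1,0), z₃=(0,0,1,0,0,1), z₄=(1,0,1,0,1,0), z₅=(0,1,0,1,0,1), and conversely every such non-negative linear combination satisfies both equations. -/
private lemma cv5 {α : Type*} (a b c d e f : α) : ![a,b,c,d,e,f] 5 = f := rfl

/-- a vector (a,b,c,d,e,f) ∈ ℕ⁶ satisfies a+b = d+e and b+c = e+f
iff it is a non-negative integer linear combination of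
z₁=(1,0,0,1,0,0), z₂=(0,1,0,0,1,0), z₃=(0,0,1,0,0,1),
z₄=(1,0,1,0,1,0), z₅=(0,1,0,1,0,1). -/
theorem cn63_cone (p : Fin 6 → ℕ) :
    (p 0 + p 1 = p 3 + p 4 ∧ p 1 + p 2 = p 4 + p 5) ↔
      ∃ c₁ c₂ c₃ c₄ c₅ : ℕ,
        p = fun i => c₁ * ![1,0,0,1,0,0] i + c₂ * ![0,1,0,0,1,0] i +
          c₃ * ![0,0,1,0,0,1] i + c₄ * ![1,0,1,0,1,0] i + c₅ * ![0,1,0,1,0,1] i := by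
  constructor
  · rintro ⟨h1, h2⟩
    rcases le_or_gt (p 1) (p 4) with h | h
    · exact ⟨p 3, p 1, p 5, p 4 - p 1, 0, by
        funext i; fin_cases i <;> simp [cv5] <;> omega⟩
    · exact ⟨p 0, p 4, p 2, 0, p 1 - p 4, by
        funext i; fin_cases i <;> simp [cv5] <;> omega⟩
  · rintro ⟨c₁, c₂, c₃, c₄, c₅, rfl⟩
    constructor <;> simp [cv5] <;> ring
end

section
/- Let G be a SetNim game and P its set of P-positions, and let z be a zero-one vector that is invariant for P (i.e., for all positions p and integers c with p + c·z ≥ 0, p ∈ P iff p + c·z ∈ P). If p ∉ P, z̃ is a non-negative integer combination of invariant vectors with p − z̃ ≥ 0, and m is a legal move taking p − z̃ to a position in P, then m is also a legal move from p, and p − m ∈ P. -/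
/-- A zero-one vector z is invariant for a set S of positions if adding any
integer multiple of z that keeps all entries non-negative preserves
membership in S. -/
def InvariantVec {n : ℕ} (S : Set (Fin n → ℕ)) (z : Fin n → ℕ) : Prop :=
  ∀ p : Fin n → ℕ, ∀ c : ℤ, (∀ i, 0 ≤ (p i : ℤ) + c * (z i : ℤ)) →
    (p ∈ S ↔ (fun i => ((p i : ℤ) + c * (z i : ℤ)).toNat) ∈ S)

/-- m is a legal move vector from position q: m is non-zero, m ≤ q
coordinatewise, and the support of m lies in some allowed move set. -/
def LegalVec {n : ℕ} (A : Set (Set (Fin n))) (q m : Fin n → ℕ) : Prop :=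
  m ≠ 0 ∧ (∀ i, m i ≤ q i) ∧ ∃ a ∈ A, ∀ i, m i ≠ 0 → i ∈ a

lemma inv_add_nat {n : ℕ} {S : Set (Fin n → ℕ)} {z : Fin n → ℕ}
    (h : InvariantVec S z) (p : Fin n → ℕ) (c : ℕ) :
    p ∈ S ↔ (fun i => p i + c * z i) ∈ S := by
  have h2 := h p (c : ℤ) (fun i => by positivity)
  have he : (fun i => ((p i : ℤ) + (c : ℤ) * (z i : ℤ)).toNat)
      = fun i => p i + c * z i := by
    funext i; push_cast; omega
  rwa [he] at h2

lemma inv_add_sum {n k : ℕ} {S : Set (Fin n → ℕ)} (z : Fin k → (Fin n → ℕ))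
    (hinv : ∀ j, InvariantVec S (z j)) (c : Fin k → ℕ) :
    ∀ (s : Finset (Fin k)) (p : Fin n → ℕ),
      (p ∈ S ↔ (fun i => p i + ∑ j ∈ s, c j * z j i) ∈ S) := by
  intro s
  induction s using Finset.induction_on with
  | empty => intro p; simp
  | insert a s ha ih =>
    intro p
    have h1 := ih p
    have h2 := inv_add_nat (hinv a) (fun i => p i + ∑ j ∈ s, c j * z j i) (c a)
    have he : (fun i => (p i + ∑ j ∈ s, c j * z j i) + c a * z a i)
        = fun i => p i + ∑ j ∈ Insert.insert a s, c j * z j i := by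
      funext i; rw [Finset.sum_insert ha]; ring
    rw [he] at h2
    exact h1.trans h2

/-- Invariance Move: if p ∉ P, z̃ is a non-negative combination
of zero-one vectors invariant for the P-positions with p − z̃ ≥ 0, and m is a
legal move taking p − z̃ into P, then m is a legal move from p and p − m ∈ P. -/
theorem invariance_move {n k : ℕ} (A : Set (Set (Fin n)))
    (z : Fin k → (Fin n → ℕ))
    (hz01 : ∀ j i, z j i ≤ 1)
    (hinv : ∀ j, InvariantVec {p | PPos A p} (z j))
    (c : Fin k → ℕ) (p tz : Fin n → ℕ)
    (htz : tz = fun i => ∑ j, c j * z j i)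
    (hle : ∀ i, tz i ≤ p i)
    (hp : ¬ PPos A p)
    (m : Fin n → ℕ)
    (hm : LegalVec A (fun i => p i - tz i) m)
    (hP : PPos A (fun i => p i - tz i - m i)) :
    LegalVec A p m ∧ PPos A (fun i => p i - m i) := by
  obtain ⟨hne, hlem, ha⟩ := hm
  refine ⟨⟨hne, fun i => le_trans (hlem i) (Nat.sub_le _ _), ha⟩, ?_⟩
  have key := inv_add_sum z hinv c Finset.univ (fun i => p i - tz i - m i)
  have he : (fun i => (p i - tz i - m i) + ∑ j, c j * z j i)
      = fun i => p i - m i := by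
    funext i
    have h1 := hle i
    have h2 := hlem i
    simp only at h2
    have h3 : tz i = ∑ j, c j * z j i := by rw [htz]
    omega
  rw [he] at key
  exact key.mp hP
end

section
/- Let G = SN(n,𝒜) be a SetNim game with P-position set P, let I be a finite set of zero-one vectors each invariant for P, and suppose that for every position p there exist non-negative coefficients (c_z)_{z∈I} such that p̃ = p − Σ c_z·z is non-negative and the set of indices of non-zero entries of p̃ is contained in some A ∈ 𝒜. Then P equals exactly the set of non-negative integer linear combinations of the vectors in I. -/
theorem ppos_zero {V : Type} [Fintype V] (A : Set (Set V)) : PPos A (fun _ => 0) := by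
  rw [PPos]
  rintro q ⟨hne, hle, -⟩ _
  exact hne (funext fun i => Nat.le_zero.mp (hle i))

/-- zero position, as any function equal to zero -/
theorem ppos_zero' {V : Type} [Fintype V] (A : Set (Set V)) (p : V → ℕ)
    (h : ∀ i, p i = 0) : PPos A p := by
  have : p = fun _ => 0 := funext h
  rw [this]; exact ppos_zero A

/-- a nonzero position supported in one move set is not a P-position -/
theorem not_ppos_of_support {V : Type} [Fintype V] (A : Set (Set V)) (p : V → ℕ)
    (hne : p ≠ fun _ => 0) (a : Set V) (ha : a ∈ A) (hsupp : ∀ i, p i ≠ 0 → i ∈ a) :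
    ¬ PPos A p := by
  intro hP
  rw [PPos] at hP
  refine hP (fun _ => 0) ⟨Ne.symm hne, fun i => Nat.zero_le _, a, ha,
    fun i hi => hsupp i fun h0 => hi h0.symm⟩ (ppos_zero A)

/-- subtracting a nonneg combination of invariant vectors preserves P-membership -/
theorem ppos_sub_combo {n k : ℕ} (A : Set (Set (Fin n))) (z : Fin k → (Fin n → ℕ))
    (hinv : ∀ j, InvariantVec {p | PPos A p} (z j)) :
    ∀ N : ℕ, ∀ c : Fin k → ℕ, (∑ j, c j) = N → ∀ p : Fin n → ℕ,
      (∀ i, ∑ j, c j * z j i ≤ p i) →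
      (PPos A p ↔ PPos A (fun i => p i - ∑ j, c j * z j i)) := by
  intro N
  induction N using Nat.strong_induction_on with
  | _ N ih =>
    intro c hc p hle
    rcases Nat.eq_zero_or_pos N with h0 | hpos
    · subst h0
      have hcz : ∀ j, c j = 0 := fun j =>
        (Finset.sum_eq_zero_iff.mp hc) j (Finset.mem_univ j)
      have : (fun i => p i - ∑ j, c j * z j i) = p := by
        funext i; simp [hcz]
      rw [this]
    · have : ∃ j, c j ≠ 0 := by
        by_contra h
        push_neg at h
        simp [h] at hc
        omega
      obtain ⟨j, hj⟩ := this
      have hterm : ∀ i, z j i ≤ ∑ j', c j' * z j' i := by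
        intro i
        calc z j i ≤ c j * z j i := Nat.le_mul_of_pos_left _ (Nat.pos_of_ne_zero hj)
          _ ≤ ∑ j', c j' * z j' i :=
            Finset.single_le_sum (f := fun j' => c j' * z j' i)
              (fun j' _ => Nat.zero_le _) (Finset.mem_univ j)
      have hzle : ∀ i, z j i ≤ p i := fun i => le_trans (hterm i) (hle i)
      have step1 : PPos A p ↔ PPos A (fun i => p i - z j i) := by
        have h := hinv j p (-1) (fun i => by have := hzle i; push_cast; omega)
        have heq : (fun i => ((p i : ℤ) + (-1) * (z j i : ℤ)).toNat)
            = (fun i => p i - z j i) := by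
          funext i; have := hzle i; omega
        rwa [heq] at h
      -- decremented coefficient vector
      have hsplit : ∀ (f : Fin k → ℕ),
          (∑ j', c j' * f j') = (∑ j', (if j' = j then c j - 1 else c j') * f j') + f j := by
        intro f
        have hpt : ∀ j', c j' * f j'
            = (if j' = j then c j - 1 else c j') * f j' + (if j' = j then f j else 0) := by
          intro j'
          by_cases h : j' = j
          · subst h
            rw [if_pos rfl, if_pos rfl, Nat.sub_one]
            conv_lhs => rw [← Nat.succ_pred_eq_of_pos (Nat.pos_of_ne_zero hj)]
            rw [Nat.succ_mul]
          · simp [h]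
        rw [Finset.sum_congr rfl (fun j' _ => hpt j'), Finset.sum_add_distrib]
        simp
      set c' : Fin k → ℕ := fun j' => if j' = j then c j - 1 else c j' with hc'
      have hsum' : (∑ j', c' j') = N - 1 := by
        have := hsplit (fun _ => 1)
        simp only [mul_one] at this
        rw [hc] at this
        simp only [hc']
        omega
      have hle' : ∀ i, ∑ j', c' j' * z j' i ≤ p i - z j i := by
        intro i
        have h1 := hsplit (fun j' => z j' i)
        have h2 := hle i
        simp only [hc']
        omega
      have step2 := ih (N - 1) (by omega) c' hsum' (fun i => p i - z j i) hle'
      have hfinal : (fun i => (p i - z j i) - ∑ j', c' j' * z j' i)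
          = (fun i => p i - ∑ j', c j' * z j' i) := by
        funext i
        have h1 := hsplit (fun j' => z j' i)
        have h2 := hle i
        have h3 := hzle i
        simp only [hc']
        omega
      rw [step1, step2, hfinal]

/-- if every position can be reduced, by subtracting a
non-negative combination of the invariant zero-one vectors, to a non-negative
position whose non-zero stacks all lie in one move set, then the P-positions
are exactly the non-negative integer combinations of the invariant vectors. -/
theorem ppos_eq_cone_of_invariants {n k : ℕ} (A : Set (Set (Fin n)))
    (z : Fin k → (Fin n → ℕ))
    (hz01 : ∀ j i, z j i ≤ 1)
    (hinv : ∀ j, InvariantVec {p | PPos A p} (z j))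
    (hred : ∀ p : Fin n → ℕ, ∃ c : Fin k → ℕ,
      (∀ i, ∑ j, c j * z j i ≤ p i) ∧
      ∃ a ∈ A, ∀ i, p i - ∑ j, c j * z j i ≠ 0 → i ∈ a) :
    ∀ p : Fin n → ℕ,
      PPos A p ↔ ∃ c : Fin k → ℕ, p = fun i => ∑ j, c j * z j i := by
  intro p
  constructor
  · intro hP
    obtain ⟨c, hle, a, ha, hsupp⟩ := hred p
    have hsub := (ppos_sub_combo A z hinv (∑ j, c j) c rfl p hle).mp hP
    refine ⟨c, funext fun i => ?_⟩
    by_contra hne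
    have hne' : (fun i => p i - ∑ j, c j * z j i) ≠ fun _ => 0 := by
      intro h
      have := congrFun h i
      have := hle i
      omega
    exact not_ppos_of_support A _ hne' a ha hsupp hsub
  · rintro ⟨c, rfl⟩
    have hle : ∀ i, ∑ j, c j * z j i ≤ ∑ j, c j * z j i := fun i => le_rfl
    have h := ppos_sub_combo A z hinv (∑ j, c j) c rfl _ hle
    rw [h]
    exact ppos_zero' A _ (by intro i; simp)
end

section
/- The two zero-one vectors z₁ = (1,1,0,1,0,1) and z₂ = (1,0,1,0,1,1) are invariant for the set S = {(a,b,c,d,e,f) ∈ ℕ⁶ : a ≤ f, a+b+c = d+e+f, a = d + min(c,e)}; that is, for any p ∈ ℕ⁶ and integer c with p + c·zᵢ having non-negative entries, p ∈ S if and only if p + c·zᵢ ∈ S. -/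
/-- The set S of P-positions of the game H: a ≤ f, a+b+c = d+e+f,
a = d + min(c,e). -/
def SetH : Set (Fin 6 → ℕ) :=
  {p | p 0 ≤ p 5 ∧ p 0 + p 1 + p 2 = p 3 + p 4 + p 5 ∧
    p 0 = p 3 + min (p 2) (p 4)}

/-- the zero-one vectors z₁ = (1,1,0,1,0,1) and
z₂ = (1,0,1,0,1,1) are invariant for S. -/
theorem gameH_invariants :
    InvariantVec SetH ![1, 1, 0, 1, 0, 1] ∧ InvariantVec SetH ![1, 0, 1, 0, 1, 1] := by
  constructor <;>
  · intro p c h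
    have h0 := h 0; have h1 := h 1; have h2 := h 2
    have h3 := h 3; have h4 := h 4; have h5 := h 5
    have e5 : ∀ (a b c d e f : ℕ), (![a, b, c, d, e, f] : Fin 6 → ℕ) 5 = f := fun _ _ _ _ _ _ => rfl
    simp only [SetH, Set.mem_setOf_eq, Matrix.cons_val_zero, Matrix.cons_val_one,
      Matrix.head_cons, Matrix.cons_val_two, Matrix.tail_cons, Matrix.cons_val_three,
      Matrix.cons_val_four, e5,
      Fin.isValue, Nat.cast_one, Nat.cast_zero, mul_one, mul_zero, add_zero] at *
    omega
end

section
/- In the simplicial-complex game SimNim(Δ), if C is a circuit of Δ (a minimal non-face: C ∉ Δ but every proper subset of C is in Δ), then for every natural number n, the position n·e(C) (which has n tokens on each vertex of C and 0 elsewhere) is a P-position. -/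
/-- in SimNim(Δ) on a simplicial complex Δ, for any circuit C
(a minimal non-face) and any n, the position with n tokens on each vertex of C
and 0 elsewhere is a P-position. -/
theorem simNim_circuit_ppos {V : Type} [Fintype V] [DecidableEq V]
    (Δ : Set (Finset V))
    (hsingle : ∀ v : V, ({v} : Finset V) ∈ Δ)
    (hdown : ∀ F ∈ Δ, ∀ G : Finset V, G ⊆ F → G ∈ Δ)
    (C : Finset V) (hC1 : C ∉ Δ) (hC2 : ∀ G : Finset V, G ⊂ C → G ∈ Δ)
    (n : ℕ) :
    PPos {s : Set V | ∃ F ∈ Δ, s = ↑F} (fun v => if v ∈ C then n else 0) := by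
  induction n using Nat.strong_induction_on with
  | _ n IH =>
  rw [PPos]
  intro q hq hPq
  obtain ⟨hne, hle, a, ⟨F, hF, rfl⟩, hsupp⟩ := hq
  -- C is not a subset of F
  have hCF : ¬ C ⊆ F := fun h => hC1 (hdown F hF C h)
  obtain ⟨v₀, hv₀C, hv₀F⟩ := Finset.not_subset.mp hCF
  have hqv₀ : q v₀ = n := by
    by_contra h
    have := hsupp v₀ (by simpa [hv₀C] using h)
    exact hv₀F (by simpa using this)
  -- q is zero outside C
  have hq0 : ∀ v, v ∉ C → q v = 0 := by
    intro v hv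
    have := hle v
    simpa [hv] using this
  -- some w in C with q w < n
  obtain ⟨w, hw⟩ := Function.ne_iff.mp hne
  have hwC : w ∈ C := by
    by_contra h
    exact hw (by simp [hq0 w h, h])
  have hqw : q w < n := lt_of_le_of_ne (by simpa [hwC] using hle w) (by simpa [hwC] using hw)
  have hCne : C.Nonempty := ⟨w, hwC⟩
  set m := C.inf' hCne q with hm
  obtain ⟨w₀, hw₀C, hw₀⟩ := Finset.exists_mem_eq_inf' hCne q
  have hmle : ∀ v ∈ C, m ≤ q v := fun v hv => Finset.inf'_le q hv
  have hmn : m < n := lt_of_le_of_lt (hmle w hwC) hqw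
  -- the response move to m·e(C)
  set r : V → ℕ := fun v => if v ∈ C then m else 0 with hr
  have hmove : Move {s : Set V | ∃ F ∈ Δ, s = ↑F} q r := by
    refine ⟨?_, ?_, ↑(C.erase w₀), ⟨C.erase w₀, hC2 _ (Finset.erase_ssubset hw₀C), rfl⟩, ?_⟩
    · intro h
      have := congrFun h v₀
      simp only [hr, hv₀C, if_pos, hqv₀] at this
      omega
    · intro v
      by_cases hv : v ∈ C
      · simpa [hr, hv] using hmle v hv
      · simp [hr, hv, hq0 v hv]
    · intro v hv
      have hvC : v ∈ C := by
        by_contra h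
        exact hv (by simp [hr, h, hq0 v h])
      have hvw₀ : v ≠ w₀ := by
        intro h
        subst h
        exact hv (by simp [hr, hvC, ← hw₀, hm])
      simp [hvw₀, hvC]
  rw [PPos] at hPq
  exact hPq r hmove (IH m hmn)
end
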